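/- For all linear endomorphisms X, Y of K⟨A⟩, for every real inner product space and every family of vectors (V_w), and at every grade n: ⟨X, Y⟩ = ⟨|S|∘X, |S|∘Y⟩, where |S| is the reversal endomorphism and the inner product is taken over the words of length n. -/

import Mathlib

open Finsupp

/-- Words over the alphabet `A = {0,1,…,d}`. -/
abbrev Word (d : ℕ) : Type := List (Fin (d+1))

/-- The free real vector space with basis the set of all words. -/
abbrev KA (d : ℕ) : Type := Word d →₀ ℝ

/-- Shuffle product of two words, as an element of `KA d`. -/
noncomputable def shuffleWord (d : ℕ) : Word d → Word d → KA d
  | [], v => Finsupp.single v 1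
  | a :: u, [] => Finsupp.single (a :: u) 1
  | a :: u, b :: v =>
      Finsupp.mapDomain (List.cons a) (shuffleWord d u (b :: v)) +
      Finsupp.mapDomain (List.cons b) (shuffleWord d (a :: u) v)
  termination_by u v => u.length + v.length

/-- Bilinear extension of the shuffle product to `KA d`. -/
noncomputable def sh (d : ℕ) (x y : KA d) : KA d :=
  x.sum fun u cu => y.sum fun v cv => (cu * cv) • shuffleWord d u v

/-- Admissible words: concatenations of blocks each of which is the single
letter `0` or a pair `aa` with `a ≠ 0`. -/
inductive Admissible (d : ℕ) : Word d → Prop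
  | nil : Admissible d []
  | zero {w : Word d} : Admissible d w → Admissible d (0 :: w)
  | pair {w : Word d} (a : Fin (d+1)) : a ≠ 0 → Admissible d w →
      Admissible d (a :: a :: w)

/-- Number of `0` letters. -/
def zc (d : ℕ) (w : Word d) : ℕ := w.count 0

/-- Half the number of nonzero letters. -/
def dc (d : ℕ) (w : Word d) : ℕ := (w.length - w.count 0) / 2

def nc (d : ℕ) (w : Word d) : ℕ := zc d w + dc d w

open Classical in
/-- The expectation map on words. -/
noncomputable def Ebar (d : ℕ) (t : ℝ) (w : Word d) : ℝ :=
  if Admissible d w then t ^ nc d w / (2 ^ dc d w * Nat.factorial (nc d w)) else 0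

/-- Linear extension of the expectation map to `KA d`. -/
noncomputable def EbarL (d : ℕ) (t : ℝ) (x : KA d) : ℝ :=
  x.sum fun w c => c * Ebar d t w

/-- The linear endomorphism of `KA d` determined by values on basis words. -/
noncomputable def wordLift (d : ℕ) (f : Word d → KA d) : KA d →ₗ[ℝ] KA d :=
  Finsupp.lsum ℝ fun w => LinearMap.toSpanSingleton ℝ (KA d) (f w)

/-- The identity endomorphism `id`. -/
noncomputable def idE (d : ℕ) : KA d →ₗ[ℝ] KA d := LinearMap.id

/-- The reversal endomorphism `|S|`. -/
noncomputable def revE (d : ℕ) : KA d →ₗ[ℝ] KA d :=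
  wordLift d fun w => Finsupp.single w.reverse 1

/-- The antipode `S`. -/
noncomputable def Sa (d : ℕ) : KA d →ₗ[ℝ] KA d :=
  wordLift d fun w => Finsupp.single w.reverse ((-1 : ℝ) ^ w.length)

/-- The convolution unit `ν`. -/
noncomputable def nuE (d : ℕ) : KA d →ₗ[ℝ] KA d :=
  wordLift d fun w => if w = [] then Finsupp.single ([] : Word d) 1 else 0

/-- The expectation endomorphism `E`. -/
noncomputable def EE (d : ℕ) (t : ℝ) : KA d →ₗ[ℝ] KA d :=
  wordLift d fun w => Finsupp.single ([] : Word d) (Ebar d t w)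

/-- The convolution product `X ⋆ Y`. -/
noncomputable def conv (d : ℕ) (X Y : KA d →ₗ[ℝ] KA d) : KA d →ₗ[ℝ] KA d :=
  wordLift d fun w => ∑ k ∈ Finset.range (w.length + 1),
    sh d (X (Finsupp.single (w.take k) 1)) (Y (Finsupp.single (w.drop k) 1))

/-- Convolution powers, `X^{⋆0} = ν`. -/
noncomputable def convPow (d : ℕ) (X : KA d →ₗ[ℝ] KA d) : ℕ → (KA d →ₗ[ℝ] KA d)
  | 0 => nuE d
  | k + 1 => conv d X (convPow d X k)

/-- The inner product `⟨X,Y⟩` of endomorphisms, taken over the words of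
length `n`, relative to the family of vectors `Vf`. -/
noncomputable def ip (d : ℕ) (t : ℝ) {H : Type*} [NormedAddCommGroup H]
    [InnerProductSpace ℝ H] (Vf : Word d → H) (n : ℕ)
    (X Y : KA d →ₗ[ℝ] KA d) : ℝ :=
  ∑ u : Fin n → Fin (d+1), ∑ v : Fin n → Fin (d+1),
    EbarL d t (sh d (X (Finsupp.single (List.ofFn u) 1))
                    (Y (Finsupp.single (List.ofFn v) 1))) *
      (inner ℝ (Vf (List.ofFn u)) (Vf (List.ofFn v)) : ℝ)

/-- Positive semidefiniteness of the expectation Gram matrix at grade `n`: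
indexed by the words of length `n` together with the empty word. -/
def gramPSD (d n : ℕ) (t : ℝ) : Prop :=
  ∀ c : Option (Fin n → Fin (d+1)) → ℝ,
    0 ≤ ∑ x : Option (Fin n → Fin (d+1)), ∑ y : Option (Fin n → Fin (d+1)),
      c x * c y *
        EbarL d t (shuffleWord d (x.elim ([] : Word d) List.ofFn)
                                 (y.elim ([] : Word d) List.ofFn))



lemma shuffleWord_nil_left (d : ℕ) (w : Word d) : shuffleWord d [] w = Finsupp.single w 1 := by
  rw [shuffleWord]

lemma shuffleWord_nil_right (d : ℕ) (w : Word d) : shuffleWord d w [] = Finsupp.single w 1 := by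
  cases w <;> simp [shuffleWord]

lemma shuffleWord_cons_cons (d : ℕ) (a b : Fin (d+1)) (u v : Word d) :
    shuffleWord d (a :: u) (b :: v) =
      Finsupp.mapDomain (List.cons a) (shuffleWord d u (b :: v)) +
      Finsupp.mapDomain (List.cons b) (shuffleWord d (a :: u) v) := by
  rw [shuffleWord]

lemma mapDomain_cons_append (d : ℕ) (c a : Fin (d+1)) (x : KA d) :
    Finsupp.mapDomain (List.cons c) (Finsupp.mapDomain (· ++ [a]) x) =
      Finsupp.mapDomain (· ++ [a]) (Finsupp.mapDomain (List.cons c) x) := by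
  rw [← Finsupp.mapDomain_comp, ← Finsupp.mapDomain_comp]
  rfl

theorem shuffleWord_snoc (d : ℕ) (a b : Fin (d+1)) :
    (u v : Word d) → shuffleWord d (u ++ [a]) (v ++ [b]) =
      Finsupp.mapDomain (· ++ [a]) (shuffleWord d u (v ++ [b])) +
      Finsupp.mapDomain (· ++ [b]) (shuffleWord d (u ++ [a]) v)
  | [], [] => by
      simp only [List.nil_append, shuffleWord_cons_cons, shuffleWord_nil_left,
        shuffleWord_nil_right, Finsupp.mapDomain_single, List.cons_append]
      abel
  | [], c :: v' => by
      have IH := shuffleWord_snoc d a b [] v'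
      simp only [List.nil_append, List.cons_append] at IH ⊢
      rw [shuffleWord_cons_cons, IH, shuffleWord_cons_cons d a c [] v',
        shuffleWord_nil_left, shuffleWord_nil_left]
      simp only [Finsupp.mapDomain_add, Finsupp.mapDomain_single, mapDomain_cons_append,
        shuffleWord_nil_left, List.append_assoc, List.cons_append, List.nil_append]
      abel
  | e :: u', [] => by
      have IH := shuffleWord_snoc d a b u' []
      simp only [List.nil_append, List.cons_append] at IH ⊢
      rw [shuffleWord_cons_cons, IH, shuffleWord_cons_cons d e b u' [],
        shuffleWord_nil_right, shuffleWord_nil_right]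
      simp only [Finsupp.mapDomain_add, Finsupp.mapDomain_single, mapDomain_cons_append,
        shuffleWord_nil_right, List.append_assoc, List.cons_append, List.nil_append]
      abel
  | e :: u', f :: v' => by
      have IH1 := shuffleWord_snoc d a b u' (f :: v')
      have IH2 := shuffleWord_snoc d a b (e :: u') v'
      simp only [List.cons_append] at IH1 IH2 ⊢
      rw [shuffleWord_cons_cons d e f, IH1, IH2,
        shuffleWord_cons_cons d e f (u') (v' ++ [b]),
        shuffleWord_cons_cons d e f (u' ++ [a]) v']
      simp only [Finsupp.mapDomain_add, mapDomain_cons_append]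
      abel
  termination_by u v => u.length + v.length

theorem mapDomain_reverse_shuffleWord (d : ℕ) :
    (u v : Word d) → Finsupp.mapDomain List.reverse (shuffleWord d u v) =
      shuffleWord d u.reverse v.reverse
  | [], v => by
      simp [shuffleWord_nil_left, Finsupp.mapDomain_single]
  | a :: u, [] => by
      simp [shuffleWord_nil_right, Finsupp.mapDomain_single]
  | a :: u, b :: v => by
      have IH1 := mapDomain_reverse_shuffleWord d u (b :: v)
      have IH2 := mapDomain_reverse_shuffleWord d (a :: u) v
      rw [shuffleWord_cons_cons, Finsupp.mapDomain_add, ← Finsupp.mapDomain_comp,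
          ← Finsupp.mapDomain_comp]
      have h1 : (List.reverse ∘ List.cons a : Word d → Word d) = (· ++ [a]) ∘ List.reverse := by
        funext w; simp
      have h2 : (List.reverse ∘ List.cons b : Word d → Word d) = (· ++ [b]) ∘ List.reverse := by
        funext w; simp
      rw [h1, h2, Finsupp.mapDomain_comp, Finsupp.mapDomain_comp, IH1, IH2]
      have hs := shuffleWord_snoc d a b u.reverse v.reverse
      rw [List.reverse_cons, List.reverse_cons, hs]
  termination_by u v => u.length + v.length

lemma Admissible.append_zero {d : ℕ} {w : Word d} (h : Admissible d w) :
    Admissible d (w ++ [0]) := by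
  induction h with
  | nil => exact Admissible.zero Admissible.nil
  | zero _ ih => exact Admissible.zero ih
  | pair a ha _ ih => exact Admissible.pair a ha ih

lemma Admissible.append_pair {d : ℕ} {w : Word d} (a : Fin (d+1)) (ha : a ≠ 0)
    (h : Admissible d w) : Admissible d (w ++ [a, a]) := by
  induction h with
  | nil => exact Admissible.pair a ha Admissible.nil
  | zero _ ih => exact Admissible.zero ih
  | pair b hb _ ih => exact Admissible.pair b hb ih

lemma Admissible.reverse {d : ℕ} {w : Word d} (h : Admissible d w) :
    Admissible d w.reverse := by
  induction h with
  | nil => exact Admissible.nil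
  | zero _ ih => simpa using ih.append_zero
  | pair a ha _ ih =>
      have := ih.append_pair a ha
      simpa [List.append_assoc] using this

lemma admissible_reverse_iff {d : ℕ} (w : Word d) :
    Admissible d w.reverse ↔ Admissible d w := by
  constructor
  · intro h; simpa using h.reverse
  · exact Admissible.reverse

lemma Ebar_reverse (d : ℕ) (t : ℝ) (w : Word d) : Ebar d t w.reverse = Ebar d t w := by
  unfold Ebar nc zc dc
  rw [admissible_reverse_iff, List.count_reverse, List.length_reverse]

lemma EbarL_mapDomain_reverse (d : ℕ) (t : ℝ) (x : KA d) :
    EbarL d t (Finsupp.mapDomain List.reverse x) = EbarL d t x := by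
  unfold EbarL
  rw [Finsupp.sum_mapDomain_index (by simp) (by intros; ring)]
  exact Finsupp.sum_congr fun w _ => by rw [Ebar_reverse]

lemma revE_apply (d : ℕ) (x : KA d) : revE d x = Finsupp.mapDomain List.reverse x := by
  unfold revE wordLift
  rw [Finsupp.lsum_apply, Finsupp.mapDomain]
  refine Finsupp.sum_congr fun w _ => ?_
  simp [LinearMap.toSpanSingleton_apply, Finsupp.smul_single']

lemma mapDomain_finsupp_sum (d : ℕ) (x : KA d) (f : Word d → ℝ → KA d) :
    Finsupp.mapDomain List.reverse (x.sum f) =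
      x.sum fun a c => Finsupp.mapDomain List.reverse (f a c) :=
  map_finsuppSum (Finsupp.mapDomain.addMonoidHom List.reverse) x f

lemma sh_mapDomain_reverse (d : ℕ) (x y : KA d) :
    sh d (Finsupp.mapDomain List.reverse x) (Finsupp.mapDomain List.reverse y) =
      Finsupp.mapDomain List.reverse (sh d x y) := by
  unfold sh
  rw [Finsupp.sum_mapDomain_index (by simp) (by intros; rw [← Finsupp.sum_add]; exact Finsupp.sum_congr fun _ _ => by rw [add_mul, add_smul])]
  rw [mapDomain_finsupp_sum]
  refine Finsupp.sum_congr fun u _ => ?_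
  rw [Finsupp.sum_mapDomain_index (by simp) (by intros; simp [mul_add, add_smul])]
  rw [mapDomain_finsupp_sum]
  refine Finsupp.sum_congr fun v _ => ?_
  rw [Finsupp.mapDomain_smul, mapDomain_reverse_shuffleWord]

theorem stmt_9x (d n : ℕ) (hd : 1 ≤ d) (hn : 1 ≤ n) (t : ℝ) (ht : 0 < t)
    {H : Type*} [NormedAddCommGroup H] [InnerProductSpace ℝ H]
    (Vf : Word d → H) (X Y : KA d →ₗ[ℝ] KA d) :
    ip d t Vf n X Y = ip d t Vf n (revE d ∘ₗ X) (revE d ∘ₗ Y) := by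
  unfold ip
  refine Finset.sum_congr rfl fun u _ => Finset.sum_congr rfl fun v _ => ?_
  congr 1
  rw [LinearMap.comp_apply, LinearMap.comp_apply, revE_apply, revE_apply,
    sh_mapDomain_reverse, EbarL_mapDomain_reverse]

theorem stmt_9 (d n : ℕ) (hd : 1 ≤ d) (hn : 1 ≤ n) (t : ℝ) (ht : 0 < t)
    {H : Type*} [NormedAddCommGroup H] [InnerProductSpace ℝ H]
    (Vf : Word d → H) (X Y : KA d →ₗ[ℝ] KA d) :
    ip d t Vf n X Y = ip d t Vf n (revE d ∘ₗ X) (revE d ∘ₗ Y) :=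
  stmt_9x d n hd hn t ht Vf X Y
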